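/- Let n ≥ 6, let G be a graph maximizing the Q-spread s_Q among all connected graphs on n vertices, and let x be a positive unit eigenvector of Q(G) for q1(G). Then for every vertex v, x_v < √n/(n − 3). -/

import Mathlib

/-- The adjacency matrix of a simple graph on `Fin n`, over `ℝ`. -/
noncomputable def adjMat {n : ℕ} (G : SimpleGraph (Fin n)) : Matrix (Fin n) (Fin n) ℝ :=
  letI : DecidableRel G.Adj := Classical.decRel _
  G.adjMatrix ℝ

/-- The set of eigenvalues of a real square matrix. -/
def eigSet {n : ℕ} (M : Matrix (Fin n) (Fin n) ℝ) : Set ℝ :=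
  {mu : ℝ | ∃ x : Fin n → ℝ, x ≠ 0 ∧ M.mulVec x = mu • x}

/-- The largest eigenvalue of a real square matrix. -/
noncomputable def lamMax {n : ℕ} (M : Matrix (Fin n) (Fin n) ℝ) : ℝ := sSup (eigSet M)

/-- The least eigenvalue of a real square matrix. -/
noncomputable def lamMin {n : ℕ} (M : Matrix (Fin n) (Fin n) ℝ) : ℝ := sInf (eigSet M)

/-- `λ₁(G)`: the largest adjacency eigenvalue of `G`. -/
noncomputable def lam1 {n : ℕ} (G : SimpleGraph (Fin n)) : ℝ := lamMax (adjMat G)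

/-- The degree of a vertex. -/
noncomputable def deg {n : ℕ} (G : SimpleGraph (Fin n)) (v : Fin n) : ℕ :=
  Nat.card {u : Fin n // G.Adj v u}

/-- The signless Laplacian `Q(G) = D(G) + A(G)`. -/
noncomputable def signlessLap {n : ℕ} (G : SimpleGraph (Fin n)) : Matrix (Fin n) (Fin n) ℝ :=
  Matrix.diagonal (fun v => (deg G v : ℝ)) + adjMat G

/-- `q₁(G)`: the largest signless Laplacian eigenvalue. -/
noncomputable def q1 {n : ℕ} (G : SimpleGraph (Fin n)) : ℝ := lamMax (signlessLap G)

/-- `qₙ(G)`: the least signless Laplacian eigenvalue. -/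
noncomputable def qmin {n : ℕ} (G : SimpleGraph (Fin n)) : ℝ := lamMin (signlessLap G)

/-- The `Q`-spread `s_Q(G) = q₁(G) - qₙ(G)`. -/
noncomputable def sQ {n : ℕ} (G : SimpleGraph (Fin n)) : ℝ := q1 G - qmin G

/-- The complete split graph `CS_{n,ω}`: a clique on the first `ω` vertices, completely
joined to an independent set on the remaining `n - ω` vertices. -/
def CS (n w : ℕ) : SimpleGraph (Fin n) where
  Adj u v := u ≠ v ∧ ((u : ℕ) < w ∨ (v : ℕ) < w)
  symm := by constructor; intro u v h; exact ⟨h.1.symm, h.2.symm⟩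
  loopless := by constructor; intro u h; exact h.1 rfl

/-- `K_{n-1}^+`: the complete graph on the first `n-1` vertices together with a pendant
vertex (the last vertex) joined to exactly one clique vertex (vertex `0`). -/
def KPlus (n : ℕ) : SimpleGraph (Fin n) where
  Adj u v := u ≠ v ∧ (((u : ℕ) < n - 1 ∧ (v : ℕ) < n - 1) ∨ (u : ℕ) = 0 ∨ (v : ℕ) = 0)
  symm := by constructor; intro u v h; refine ⟨h.1.symm, ?_⟩; tauto
  loopless := by constructor; intro u h; exact h.1 rfl


open scoped Classical in
lemma adjMat_apply {n : ℕ} (G : SimpleGraph (Fin n)) (v u : Fin n) :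
    adjMat G v u = if G.Adj v u then 1 else 0 := by
  by_cases h : G.Adj v u <;> simp [adjMat, h]

lemma adjMat_nonneg {n : ℕ} (G : SimpleGraph (Fin n)) (v u : Fin n) : 0 ≤ adjMat G v u := by
  classical
  rw [adjMat_apply]; split <;> norm_num

lemma adjMat_le_one {n : ℕ} (G : SimpleGraph (Fin n)) (v u : Fin n) : adjMat G v u ≤ 1 := by
  classical
  rw [adjMat_apply]; split <;> norm_num

lemma adjMat_symm {n : ℕ} (G : SimpleGraph (Fin n)) (v u : Fin n) :
    adjMat G v u = adjMat G u v := by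
  classical
  rw [adjMat_apply, adjMat_apply, G.adj_comm]

lemma adjMat_diag {n : ℕ} (G : SimpleGraph (Fin n)) (v : Fin n) : adjMat G v v = 0 := by
  classical
  rw [adjMat_apply]; simp

lemma adjMat_sq {n : ℕ} (G : SimpleGraph (Fin n)) (v u : Fin n) :
    adjMat G v u * adjMat G v u = adjMat G v u := by
  classical
  rw [adjMat_apply]; split <;> norm_num

open scoped Classical in
lemma deg_eq_sum {n : ℕ} (G : SimpleGraph (Fin n)) (v : Fin n) :
    (deg G v : ℝ) = ∑ u, adjMat G v u := by
  have : deg G v = (Finset.univ.filter (fun u => G.Adj v u)).card := by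
    rw [deg, Nat.card_eq_fintype_card, Fintype.card_subtype]
  rw [this]
  rw [Finset.card_filter]
  push_cast
  refine Finset.sum_congr rfl fun u _ => ?_
  rw [adjMat_apply]

lemma mulVec_signlessLap {n : ℕ} (G : SimpleGraph (Fin n)) (y : Fin n → ℝ) (v : Fin n) :
    (signlessLap G).mulVec y v = (deg G v : ℝ) * y v + ∑ u, adjMat G v u * y u := by
  classical
  rw [signlessLap, Matrix.add_mulVec, Pi.add_apply, Matrix.mulVec_diagonal]
  congr 1

lemma deg_le {n : ℕ} (G : SimpleGraph (Fin n)) (v : Fin n) (hn : 1 ≤ n) :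
    (deg G v : ℝ) ≤ (n : ℝ) - 1 := by
  classical
  have h : Fintype.card {u : Fin n // G.Adj v u} < Fintype.card (Fin n) := by
    apply Fintype.card_subtype_lt (x := v)
    exact G.irrefl
  rw [deg, Nat.card_eq_fintype_card]
  rw [Fintype.card_fin] at h
  have : Fintype.card {u : Fin n // G.Adj v u} ≤ n - 1 := by omega
  calc ((Fintype.card {u : Fin n // G.Adj v u} : ℝ)) ≤ ((n-1 : ℕ) : ℝ) := by exact_mod_cast this
    _ ≤ (n:ℝ) - 1 := by
        have : ((n-1:ℕ):ℝ) = (n:ℝ) - 1 := by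
          have : (1:ℕ) ≤ n := hn
          push_cast [Nat.cast_sub this]
          ring
        linarith [this.le]

lemma eig_nonneg {n : ℕ} (G : SimpleGraph (Fin n)) {mu : ℝ}
    (h : mu ∈ eigSet (signlessLap G)) : 0 ≤ mu := by
  obtain ⟨y, hy0, hy⟩ := h
  have hS : 0 < ∑ v, y v ^ 2 := by
    rcases Function.ne_iff.mp hy0 with ⟨w, hw⟩
    simp only [Pi.zero_apply] at hw
    have h0 : (0:ℝ) < y w ^ 2 := lt_of_le_of_ne (sq_nonneg _) (Ne.symm (pow_ne_zero 2 hw))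
    exact lt_of_lt_of_le h0 (Finset.single_le_sum (f := fun v => y v ^ 2)
      (fun v _ => sq_nonneg _) (Finset.mem_univ w))
  have key : mu * ∑ v, y v ^ 2 = ∑ v, ∑ u, adjMat G v u * (y v ^ 2 + y v * y u) := by
    have h1 : ∀ v, mu * y v ^ 2 = (deg G v : ℝ) * y v ^ 2 + ∑ u, adjMat G v u * (y v * y u) := by
      intro v
      have hv := congrFun hy v
      rw [mulVec_signlessLap] at hv
      simp only [Pi.smul_apply, smul_eq_mul] at hv
      calc mu * y v ^ 2 = (mu * y v) * y v := by ring
        _ = ((deg G v : ℝ) * y v + ∑ u, adjMat G v u * y u) * y v := by rw [hv]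
        _ = (deg G v : ℝ) * y v ^ 2 + ∑ u, adjMat G v u * (y v * y u) := by
            rw [add_mul, Finset.sum_mul]
            congr 1
            · ring
            · exact Finset.sum_congr rfl fun u _ => by ring
    rw [Finset.mul_sum]
    refine Finset.sum_congr rfl fun v _ => ?_
    rw [h1 v, deg_eq_sum, Finset.sum_mul, ← Finset.sum_add_distrib]
    exact Finset.sum_congr rfl fun u _ => by ring
  have key2 : mu * ∑ v, y v ^ 2 = (1/2) * ∑ v, ∑ u, adjMat G v u * (y v + y u)^2 := by
    have swap : ∑ v, ∑ u, adjMat G v u * (y v ^ 2 + y v * y u)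
        = ∑ v, ∑ u, adjMat G v u * (y u ^ 2 + y v * y u) := by
      rw [Finset.sum_comm]
      refine Finset.sum_congr rfl fun v _ => Finset.sum_congr rfl fun u _ => ?_
      rw [adjMat_symm G u v]; ring_nf
    have : (2:ℝ) * (mu * ∑ v, y v ^ 2) = ∑ v, ∑ u, adjMat G v u * (y v + y u)^2 := by
      calc (2:ℝ) * (mu * ∑ v, y v ^ 2)
          = (∑ v, ∑ u, adjMat G v u * (y v ^ 2 + y v * y u))
            + ∑ v, ∑ u, adjMat G v u * (y u ^ 2 + y v * y u) := by rw [← swap, ← key]; ring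
        _ = ∑ v, ∑ u, adjMat G v u * (y v + y u)^2 := by
            rw [← Finset.sum_add_distrib]
            refine Finset.sum_congr rfl fun v _ => ?_
            rw [← Finset.sum_add_distrib]
            exact Finset.sum_congr rfl fun u _ => by ring
    linarith
  have hpos : 0 ≤ (1/2:ℝ) * ∑ v, ∑ u, adjMat G v u * (y v + y u)^2 := by
    have : ∀ v ∈ Finset.univ, (0:ℝ) ≤ ∑ u, adjMat G v u * (y v + y u)^2 := by
      intro v _
      exact Finset.sum_nonneg fun u _ => mul_nonneg (adjMat_nonneg G v u) (by positivity)
    have := Finset.sum_nonneg this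
    linarith
  nlinarith [key2, hS, hpos]

lemma eig_le {n : ℕ} (G : SimpleGraph (Fin n)) {mu : ℝ}
    (h : mu ∈ eigSet (signlessLap G)) : mu ≤ 2 * n := by
  obtain ⟨y, hy0, hy⟩ := h
  rcases Function.ne_iff.mp hy0 with ⟨w, hw⟩
  simp only [Pi.zero_apply] at hw
  obtain ⟨v, -, hv⟩ := Finset.exists_max_image Finset.univ (fun u => |y u|)
    ⟨w, Finset.mem_univ w⟩
  have hvpos : 0 < |y v| := by
    have h0 : 0 < |y w| := abs_pos.mpr hw
    exact lt_of_lt_of_le h0 (hv w (Finset.mem_univ w))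
  have heq := congrFun hy v
  rw [mulVec_signlessLap] at heq
  simp only [Pi.smul_apply, smul_eq_mul] at heq
  have habs : |mu| * |y v| ≤ 2 * (deg G v : ℝ) * |y v| := by
    have h1 : |mu * y v| ≤ (deg G v : ℝ) * |y v| + ∑ u, adjMat G v u * |y u| := by
      rw [← heq]
      calc |(deg G v : ℝ) * y v + ∑ u, adjMat G v u * y u|
          ≤ |(deg G v : ℝ) * y v| + |∑ u, adjMat G v u * y u| := abs_add_le _ _
        _ ≤ (deg G v : ℝ) * |y v| + ∑ u, adjMat G v u * |y u| := by
            gcongr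
            · rw [abs_mul, abs_of_nonneg (by positivity : (0:ℝ) ≤ (deg G v : ℝ))]
            · refine (Finset.abs_sum_le_sum_abs _ _).trans ?_
              refine Finset.sum_le_sum fun u _ => ?_
              rw [abs_mul, abs_of_nonneg (adjMat_nonneg G v u)]
    have h2 : ∑ u, adjMat G v u * |y u| ≤ (deg G v : ℝ) * |y v| := by
      rw [deg_eq_sum, Finset.sum_mul]
      exact Finset.sum_le_sum fun u _ => by
        exact mul_le_mul_of_nonneg_left (hv u (Finset.mem_univ u)) (adjMat_nonneg G v u)
    rw [abs_mul] at h1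
    linarith
  have hmu : |mu| ≤ 2 * (deg G v : ℝ) := le_of_mul_le_mul_right (by linarith) hvpos
  have hd : (deg G v : ℝ) ≤ n := by
    have : deg G v ≤ n := by
      rw [deg]
      calc Nat.card {u : Fin n // G.Adj v u} ≤ Nat.card (Fin n) := by
            exact Nat.card_le_card_of_injective Subtype.val Subtype.val_injective
        _ = n := Nat.card_eq_fintype_card.trans (Fintype.card_fin n)
    exact_mod_cast this
  calc mu ≤ |mu| := le_abs_self mu
    _ ≤ 2 * n := by linarith

def vz (n : ℕ) (hn : 6 ≤ n) : Fin n := ⟨0, by omega⟩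

def vl (n : ℕ) (hn : 6 ≤ n) : Fin n := ⟨n - 1, by omega⟩

lemma vz_val {n : ℕ} (hn : 6 ≤ n) : ((vz n hn : Fin n) : ℕ) = 0 := rfl

lemma vl_val {n : ℕ} (hn : 6 ≤ n) : ((vl n hn : Fin n) : ℕ) = n - 1 := rfl

lemma vz_ne_vl {n : ℕ} (hn : 6 ≤ n) : vz n hn ≠ vl n hn := by
  simp only [vz, vl, Ne, Fin.mk.injEq]
  omega

lemma eq_vz_iff {n : ℕ} (hn : 6 ≤ n) (u : Fin n) : u = vz n hn ↔ (u : ℕ) = 0 := by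
  constructor
  · intro h; subst h; rfl
  · intro h; exact Fin.ext h

lemma eq_vl_iff {n : ℕ} (hn : 6 ≤ n) (u : Fin n) : u = vl n hn ↔ (u : ℕ) = n - 1 := by
  constructor
  · intro h; subst h; rfl
  · intro h; exact Fin.ext h

lemma row_z {n : ℕ} (hn : 6 ≤ n) (u : Fin n) :
    adjMat (KPlus n) (vz n hn) u = if u = vz n hn then 0 else 1 := by
  rw [adjMat_apply]
  by_cases h : u = vz n hn
  · rw [if_pos h, if_neg]
    intro hc
    exact hc.1 h.symm
  · rw [if_neg h, if_pos]
    exact ⟨fun hc => h hc.symm, Or.inr (Or.inl (vz_val hn))⟩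

lemma row_l {n : ℕ} (hn : 6 ≤ n) (u : Fin n) :
    adjMat (KPlus n) (vl n hn) u = if u = vz n hn then 1 else 0 := by
  rw [adjMat_apply]
  by_cases h : u = vz n hn
  · rw [if_pos h, if_pos]
    refine ⟨fun hc => vz_ne_vl hn (h ▸ hc.symm), Or.inr (Or.inr ?_)⟩
    rw [h, vz_val hn]
  · rw [if_neg h, if_neg]
    rintro ⟨hne, ⟨hc1, hc2⟩ | hc | hc⟩
    · rw [vl_val hn] at hc1
      omega
    · rw [vl_val hn] at hc
      omega
    · exact h ((eq_vz_iff hn u).mpr hc)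

lemma row_mid {n : ℕ} (hn : 6 ≤ n) (v : Fin n) (hvz : v ≠ vz n hn) (hvl : v ≠ vl n hn)
    (u : Fin n) :
    adjMat (KPlus n) v u = if u = v then 0 else if u = vl n hn then 0 else 1 := by
  rw [adjMat_apply]
  have hv1 : (v : ℕ) ≠ 0 := fun hc => hvz ((eq_vz_iff hn v).mpr hc)
  have hv2 : (v : ℕ) < n - 1 := by
    have h1 := v.isLt
    have h2 : (v : ℕ) ≠ n - 1 := fun hc => hvl ((eq_vl_iff hn v).mpr hc)
    omega
  by_cases h1 : u = v
  · rw [if_pos h1, if_neg]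
    intro hc
    exact hc.1 h1.symm
  · rw [if_neg h1]
    by_cases h2 : u = vl n hn
    · rw [if_pos h2, if_neg]
      rintro ⟨hne, ⟨hc1, hc2⟩ | hc | hc⟩
      · rw [h2, vl_val hn] at hc2
        omega
      · exact hv1 hc
      · rw [h2, vl_val hn] at hc
        omega
    · rw [if_neg h2, if_pos]
      have hu : (u : ℕ) < n - 1 := by
        have ha := u.isLt
        have hb : (u : ℕ) ≠ n - 1 := fun hc => h2 ((eq_vl_iff hn u).mpr hc)
        omega
      exact ⟨fun hc => h1 hc.symm, Or.inl ⟨hv2, hu⟩⟩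

noncomputable def yv (n : ℕ) (hn : 6 ≤ n) (b c : ℝ) : Fin n → ℝ :=
  fun u => if u = vz n hn then 1 else if u = vl n hn then c else b

lemma yv_decomp {n : ℕ} (hn : 6 ≤ n) (b c : ℝ) (u : Fin n) :
    yv n hn b c u = b + (if u = vz n hn then 1 - b else 0) + (if u = vl n hn then c - b else 0) := by
  rw [yv]
  by_cases h1 : u = vz n hn
  · rw [if_pos h1, if_pos h1, if_neg (h1 ▸ vz_ne_vl hn)]; ring
  · rw [if_neg h1, if_neg h1]
    by_cases h2 : u = vl n hn
    · rw [if_pos h2, if_pos h2]; ring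
    · rw [if_neg h2, if_neg h2]; ring

lemma sum_yv {n : ℕ} (hn : 6 ≤ n) (b c : ℝ) :
    ∑ u, yv n hn b c u = ((n:ℝ) - 2) * b + 1 + c := by
  rw [Finset.sum_congr rfl fun u _ => yv_decomp hn b c u]
  rw [Finset.sum_add_distrib, Finset.sum_add_distrib, Finset.sum_const,
    Finset.card_univ, Fintype.card_fin, Finset.sum_ite_eq' Finset.univ (vz n hn),
    Finset.sum_ite_eq' Finset.univ (vl n hn)]
  simp only [Finset.mem_univ, if_true, nsmul_eq_mul]
  ring

lemma yv_at_z {n : ℕ} (hn : 6 ≤ n) (b c : ℝ) : yv n hn b c (vz n hn) = 1 := by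
  rw [yv, if_pos rfl]

lemma yv_at_l {n : ℕ} (hn : 6 ≤ n) (b c : ℝ) : yv n hn b c (vl n hn) = c := by
  rw [yv, if_neg (vz_ne_vl hn).symm, if_pos rfl]

lemma yv_at_mid {n : ℕ} (hn : 6 ≤ n) (b c : ℝ) (v : Fin n) (hvz : v ≠ vz n hn)
    (hvl : v ≠ vl n hn) : yv n hn b c v = b := by
  rw [yv, if_neg hvz, if_neg hvl]

lemma deg_z {n : ℕ} (hn : 6 ≤ n) : ((deg (KPlus n) (vz n hn) : ℝ)) = (n:ℝ) - 1 := by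
  rw [deg_eq_sum, Finset.sum_congr rfl fun u _ => row_z hn u]
  rw [Finset.sum_congr rfl fun u _ =>
    (show (if u = vz n hn then (0:ℝ) else 1) = 1 - (if u = vz n hn then 1 else 0) by
      split <;> ring)]
  rw [Finset.sum_sub_distrib, Finset.sum_const, Finset.card_univ, Fintype.card_fin,
    Finset.sum_ite_eq' Finset.univ (vz n hn)]
  simp

lemma deg_l {n : ℕ} (hn : 6 ≤ n) : ((deg (KPlus n) (vl n hn) : ℝ)) = 1 := by
  rw [deg_eq_sum, Finset.sum_congr rfl fun u _ => row_l hn u,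
    Finset.sum_ite_eq' Finset.univ (vz n hn)]
  simp

lemma deg_mid {n : ℕ} (hn : 6 ≤ n) (v : Fin n) (hvz : v ≠ vz n hn) (hvl : v ≠ vl n hn) :
    ((deg (KPlus n) v : ℝ)) = (n:ℝ) - 2 := by
  rw [deg_eq_sum, Finset.sum_congr rfl fun u _ => row_mid hn v hvz hvl u]
  rw [Finset.sum_congr rfl fun u _ =>
    (show (if u = v then (0:ℝ) else if u = vl n hn then 0 else 1)
        = 1 - (if u = v then 1 else 0) - (if u = vl n hn then 1 else 0) by
      by_cases h1 : u = v
      · rw [if_pos h1, if_pos h1, if_neg (h1 ▸ hvl)]; ring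
      · rw [if_neg h1, if_neg h1]
        split <;> ring)]
  rw [Finset.sum_sub_distrib, Finset.sum_sub_distrib, Finset.sum_const, Finset.card_univ,
    Fintype.card_fin, Finset.sum_ite_eq' Finset.univ v, Finset.sum_ite_eq' Finset.univ (vl n hn)]
  simp
  ring

lemma KPlus_eig_mem {n : ℕ} (hn : 6 ≤ n) {mu : ℝ} (h1 : mu ≠ 1) (h2 : mu ≠ 2*(n:ℝ) - 5)
    (hg : ((n:ℝ) - 1 - mu) * (mu - (2*(n:ℝ) - 5)) * (mu - 1) + ((n:ℝ) - 2) * (mu - 1)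
      + (mu - (2*(n:ℝ) - 5)) = 0) :
    mu ∈ eigSet (signlessLap (KPlus n)) := by
  have hb' : mu - (2*(n:ℝ) - 5) ≠ 0 := sub_ne_zero.mpr h2
  have hc' : mu - 1 ≠ 0 := sub_ne_zero.mpr h1
  set b : ℝ := 1 / (mu - (2*(n:ℝ) - 5)) with hbdef
  set c : ℝ := 1 / (mu - 1) with hcdef
  have hb : b * (mu - (2*(n:ℝ) - 5)) = 1 := by rw [hbdef]; field_simp
  have hc : c * (mu - 1) = 1 := by rw [hcdef]; field_simp
  refine ⟨yv n hn b c, ?_, ?_⟩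
  · intro hzero
    have : yv n hn b c (vz n hn) = 0 := by rw [hzero]; rfl
    rw [yv_at_z] at this
    norm_num at this
  · funext v
    rw [mulVec_signlessLap, Pi.smul_apply, smul_eq_mul]
    by_cases hvz : v = vz n hn
    · subst hvz
      rw [deg_z hn, yv_at_z,
        Finset.sum_congr rfl fun u _ => by rw [row_z hn u],
        Finset.sum_congr rfl fun u _ =>
          (show (if u = vz n hn then (0:ℝ) else 1) * yv n hn b c u
              = yv n hn b c u - (if u = vz n hn then yv n hn b c u else 0) by
            split <;> ring),
        Finset.sum_sub_distrib, Finset.sum_ite_eq' Finset.univ (vz n hn), sum_yv hn,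
        if_pos (Finset.mem_univ (vz n hn)), yv_at_z hn b c]
      -- goal: (n-1) * 1 + ((n-2)*b + 1 + c - 1) = mu * 1
      have key : ((n:ℝ) - 1) + ((n:ℝ) - 2) * b + c = mu := by
        have hAB : (mu - (2*(n:ℝ) - 5)) * (mu - 1) ≠ 0 := mul_ne_zero hb' hc'
        apply mul_right_cancel₀ hAB
        linear_combination hg + ((n:ℝ) - 2) * (mu - 1) * hb + (mu - (2*(n:ℝ) - 5)) * hc
      linarith [key]
    · by_cases hvl : v = vl n hn
      · subst hvl
        rw [deg_l hn, yv_at_l,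
          Finset.sum_congr rfl fun u _ => by rw [row_l hn u],
          Finset.sum_congr rfl fun u _ =>
            (show (if u = vz n hn then (1:ℝ) else 0) * yv n hn b c u
                = (if u = vz n hn then yv n hn b c u else 0) by split <;> ring),
          Finset.sum_ite_eq' Finset.univ (vz n hn),
          if_pos (Finset.mem_univ (vz n hn)), yv_at_z hn b c]
        -- goal: 1 * c + 1 = mu * c
        linear_combination -hc
      · rw [deg_mid hn v hvz hvl, yv_at_mid hn b c v hvz hvl,
          Finset.sum_congr rfl fun u _ => by rw [row_mid hn v hvz hvl u],
          Finset.sum_congr rfl fun u _ =>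
            (show (if u = v then (0:ℝ) else if u = vl n hn then 0 else 1) * yv n hn b c u
                = yv n hn b c u - (if u = v then yv n hn b c u else 0)
                  - (if u = vl n hn then yv n hn b c u else 0) by
              by_cases hh1 : u = v
              · rw [if_pos hh1, if_pos hh1, if_neg (hh1 ▸ hvl)]; ring
              · rw [if_neg hh1, if_neg hh1]
                split <;> ring),
          Finset.sum_sub_distrib, Finset.sum_sub_distrib,
          Finset.sum_ite_eq' Finset.univ v, Finset.sum_ite_eq' Finset.univ (vl n hn),
          sum_yv hn, if_pos (Finset.mem_univ v), if_pos (Finset.mem_univ (vl n hn)),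
          yv_at_l hn b c, yv_at_mid hn b c v hvz hvl]
        -- goal: (n-2)*b + ((n-2)*b + 1 + c - b - c) = mu * b
        linear_combination -hb

noncomputable def gp (N mu : ℝ) : ℝ :=
  (N - 1 - mu) * (mu - (2*N - 5)) * (mu - 1) + (N - 2) * (mu - 1) + (mu - (2*N - 5))

lemma gp_cont (N : ℝ) : Continuous (gp N) := by
  unfold gp; continuity

lemma exists_root_big {n : ℕ} (hn : 6 ≤ n) :
    ∃ mu : ℝ, 2*(n:ℝ) - 4 ≤ mu ∧ mu ≠ 1 ∧ mu ≠ 2*(n:ℝ) - 5 ∧ gp (n:ℝ) mu = 0 := by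
  have hN : (6:ℝ) ≤ (n:ℝ) := by exact_mod_cast hn
  have hab : 2*(n:ℝ) - 4 ≤ 2*(n:ℝ) := by linarith
  have hmem : (0:ℝ) ∈ Set.Icc (gp (n:ℝ) (2*(n:ℝ))) (gp (n:ℝ) (2*(n:ℝ) - 4)) := by
    constructor
    · have : gp (n:ℝ) (2*(n:ℝ)) = (2*(n:ℝ) - 1) * (-4*(n:ℝ) - 7) + 5 := by unfold gp; ring
      rw [this]; nlinarith
    · have : gp (n:ℝ) (2*(n:ℝ) - 4) = 2*(n:ℝ) - 4 := by unfold gp; ring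
      rw [this]; linarith
  obtain ⟨mu, hmu, hval⟩ := intermediate_value_Icc' hab (gp_cont (n:ℝ)).continuousOn hmem
  exact ⟨mu, hmu.1, by intro h; rw [h] at hmu; linarith [hmu.1],
    by intro h; rw [h] at hmu; linarith [hmu.1], hval⟩

lemma exists_root_small {n : ℕ} (hn : 6 ≤ n) :
    ∃ mu : ℝ, mu ≤ 1 ∧ mu ≠ 1 ∧ mu ≠ 2*(n:ℝ) - 5 ∧ gp (n:ℝ) mu = 0 := by
  have hN : (6:ℝ) ≤ (n:ℝ) := by exact_mod_cast hn
  have hab : (0:ℝ) ≤ 1 := by norm_num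
  have hmem : (0:ℝ) ∈ Set.Icc (gp (n:ℝ) 1) (gp (n:ℝ) 0) := by
    constructor
    · have : gp (n:ℝ) 1 = 6 - 2*(n:ℝ) := by unfold gp; ring
      rw [this]; linarith
    · have : gp (n:ℝ) 0 = ((n:ℝ) - 2) * (2*(n:ℝ) - 6) := by unfold gp; ring
      rw [this]; nlinarith
  obtain ⟨mu, hmu, hval⟩ := intermediate_value_Icc' hab (gp_cont (n:ℝ)).continuousOn hmem
  refine ⟨mu, hmu.2, ?_, ?_, hval⟩
  · intro h
    rw [h] at hval
    have : gp (n:ℝ) 1 = 6 - 2*(n:ℝ) := by unfold gp; ring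
    rw [this] at hval; linarith
  · intro h
    rw [h] at hmu
    linarith [hmu.2]

lemma KPlus_connected {n : ℕ} (hn : 6 ≤ n) : (KPlus n).Connected := by
  rw [SimpleGraph.connected_iff]
  constructor
  · intro u v
    have key : ∀ w : Fin n, w ≠ vz n hn → (KPlus n).Adj (vz n hn) w :=
      fun w hw => ⟨fun hc => hw hc.symm, Or.inr (Or.inl (vz_val hn))⟩
    have reach : ∀ w : Fin n, (KPlus n).Reachable (vz n hn) w := by
      intro w
      by_cases h : w = vz n hn
      · subst h; exact SimpleGraph.Reachable.refl _
      · exact (key w h).reachable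
    exact (reach u).symm.trans (reach v)
  · exact ⟨vz n hn⟩


set_option maxHeartbeats 1000000 in
theorem stmt14 (n : ℕ) (hn : 6 ≤ n) (G : SimpleGraph (Fin n)) (hconn : G.Connected)
    (hmax : ∀ H : SimpleGraph (Fin n), H.Connected → sQ H ≤ sQ G)
    (x : Fin n → ℝ) (hx0 : ∀ v, 0 < x v) (hx1 : ∑ v, x v ^ 2 = 1)
    (hx : (signlessLap G).mulVec x = q1 G • x) :
    ∀ v : Fin n, x v < Real.sqrt n / ((n : ℝ) - 3) := by
  intro v
  have hN : (6:ℝ) ≤ (n:ℝ) := by exact_mod_cast hn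
  have hxne : x ≠ 0 := by
    intro h
    have h0 := hx0 v
    rw [h] at h0
    simp at h0
  have hq1mem : q1 G ∈ eigSet (signlessLap G) := ⟨x, hxne, hx⟩
  have hbddAK : BddAbove (eigSet (signlessLap (KPlus n))) :=
    ⟨2*(n:ℝ), fun mu hmu => eig_le _ hmu⟩
  have hbddBK : BddBelow (eigSet (signlessLap (KPlus n))) :=
    ⟨0, fun mu hmu => eig_nonneg _ hmu⟩
  obtain ⟨m1, hm1ge, hm1a, hm1b, hm1g⟩ := exists_root_big hn
  obtain ⟨m2, hm2le, hm2a, hm2b, hm2g⟩ := exists_root_small hn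
  have hm1mem : m1 ∈ eigSet (signlessLap (KPlus n)) :=
    KPlus_eig_mem hn hm1a hm1b (by unfold gp at hm1g; linarith [hm1g])
  have hm2mem : m2 ∈ eigSet (signlessLap (KPlus n)) :=
    KPlus_eig_mem hn hm2a hm2b (by unfold gp at hm2g; linarith [hm2g])
  have hq1K : 2*(n:ℝ) - 4 ≤ q1 (KPlus n) := le_trans hm1ge (le_csSup hbddAK hm1mem)
  have hqminK : qmin (KPlus n) ≤ 1 := le_trans (csInf_le hbddBK hm2mem) hm2le
  have hsQK : 2*(n:ℝ) - 5 ≤ sQ (KPlus n) := by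
    rw [sQ]; unfold q1 qmin lamMax lamMin at *
    linarith
  have hqminG : 0 ≤ qmin G := le_csInf ⟨q1 G, hq1mem⟩ fun mu hmu => eig_nonneg G hmu
  have hq1G : 2*(n:ℝ) - 5 ≤ q1 G := by
    have h1 := hmax (KPlus n) (KPlus_connected hn)
    rw [sQ] at h1
    have hsg : sQ G = q1 G - qmin G := rfl
    linarith
  have heq := congrFun hx v
  rw [mulVec_signlessLap] at heq
  simp only [Pi.smul_apply, smul_eq_mul] at heq
  -- heq : (deg G v : ℝ) * x v + ∑ u, adjMat G v u * x u = q1 G * x v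
  have hd1 : (deg G v : ℝ) ≤ (n:ℝ) - 1 := deg_le G v (by omega)
  have hd0 : (0:ℝ) ≤ (deg G v : ℝ) := by positivity
  have ht : 0 < x v := hx0 v
  have ht1 : x v ^ 2 ≤ 1 := by
    rw [← hx1]
    exact Finset.single_le_sum (f := fun u => x u ^ 2) (fun u _ => sq_nonneg _)
      (Finset.mem_univ v)
  have hCS : (∑ u, adjMat G v u * x u)^2 ≤ (deg G v : ℝ) * ∑ u, adjMat G v u * (x u)^2 := by
    have h1 : ∑ u, adjMat G v u * x u = ∑ u, adjMat G v u * (adjMat G v u * x u) :=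
      Finset.sum_congr rfl fun u _ => by rw [← mul_assoc, adjMat_sq]
    calc (∑ u, adjMat G v u * x u)^2
        = (∑ u, adjMat G v u * (adjMat G v u * x u))^2 := by rw [h1]
      _ ≤ (∑ u, adjMat G v u ^ 2) * ∑ u, (adjMat G v u * x u)^2 :=
          Finset.sum_mul_sq_le_sq_mul_sq _ _ _
      _ = (deg G v : ℝ) * ∑ u, adjMat G v u * (x u)^2 := by
          congr 1
          · rw [deg_eq_sum]
            exact Finset.sum_congr rfl fun u _ => by rw [sq, adjMat_sq]
          · refine Finset.sum_congr rfl fun u _ => ?_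
            rw [mul_pow, sq (adjMat G v u), adjMat_sq]
  have hsum2 : ∑ u, adjMat G v u * (x u)^2 ≤ 1 - x v ^ 2 := by
    have h1 : ∀ u, adjMat G v u * (x u)^2 ≤ (x u)^2 - (if u = v then (x u)^2 else 0) := by
      intro u
      by_cases h : u = v
      · subst h
        rw [if_pos rfl, adjMat_diag]
        simp
      · rw [if_neg h]
        have ha := adjMat_le_one G v u
        have hb := adjMat_nonneg G v u
        nlinarith [sq_nonneg (x u)]
    calc ∑ u, adjMat G v u * (x u)^2
        ≤ ∑ u, ((x u)^2 - if u = v then (x u)^2 else 0) :=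
          Finset.sum_le_sum fun u _ => h1 u
      _ = 1 - x v ^ 2 := by
          rw [Finset.sum_sub_distrib, hx1, Finset.sum_ite_eq' Finset.univ v,
            if_pos (Finset.mem_univ v)]
  have hgap : (n:ℝ) - 4 ≤ q1 G - (deg G v : ℝ) := by linarith
  have e2 : ((q1 G - (deg G v : ℝ)) * x v)^2 ≤ (deg G v : ℝ) * (1 - x v ^ 2) := by
    have e1 : (q1 G - (deg G v : ℝ)) * x v = ∑ u, adjMat G v u * x u := by linarith
    rw [e1]
    exact le_trans hCS (mul_le_mul_of_nonneg_left hsum2 hd0)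
  have hkey : ((n:ℝ)-4)^2 * x v ^ 2 ≤ ((n:ℝ)-1) * (1 - x v ^ 2) := by
    have hsq : ((n:ℝ)-4)^2 ≤ (q1 G - (deg G v : ℝ))^2 := by nlinarith
    have h2 : ((n:ℝ)-4)^2 * x v ^ 2 ≤ (q1 G - (deg G v : ℝ))^2 * x v ^ 2 :=
      mul_le_mul_of_nonneg_right hsq (sq_nonneg _)
    have h3 : (deg G v : ℝ) * (1 - x v ^ 2) ≤ ((n:ℝ)-1) * (1 - x v ^ 2) :=
      mul_le_mul_of_nonneg_right hd1 (by linarith)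
    nlinarith [e2]
  have hfin : x v ^ 2 * ((n:ℝ)-3)^2 < (n:ℝ) := by
    have hD : (0:ℝ) < ((n:ℝ)-4)^2 + ((n:ℝ)-1) := by nlinarith
    have hTD : x v ^ 2 * (((n:ℝ)-4)^2 + ((n:ℝ)-1)) ≤ (n:ℝ) - 1 := by nlinarith [hkey]
    nlinarith [mul_le_mul_of_nonneg_right hTD (sq_nonneg ((n:ℝ)-3)), hD]
  have h3 : (0:ℝ) < (n:ℝ) - 3 := by linarith
  rw [lt_div_iff₀ h3]
  refine (Real.lt_sqrt (by positivity)).mpr ?_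
  nlinarith [hfin]
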